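/- Let (X, d, h, i, p) be contraction data onto H and let δ : X → X be a perturbation of d (i.e. D := d + δ satisfies D ∘ D = 0), such that (h ∘ δ)^N = 0 for some natural number N. Set S := Σ_{k=0}^{N−1} (−1)^k (h ∘ δ)^k and Σ := δ ∘ S. Then d ∘ Σ ∘ i = − Σ ∘ (i ∘ p) ∘ Σ ∘ i. -/
import Mathlib


/-- For contraction data `(X, d, h, i, p)` onto `H` and a
perturbation `δ` of `d` with `(h ∘ δ)^N = 0`, setting
`S := Σ_{k<N} (−1)^k (h ∘ δ)^k` and `T := δ ∘ S`, one has
`d ∘ T ∘ i = − T ∘ (i ∘ p) ∘ T ∘ i`. -/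
theorem perturbation_identity_base {K X H : Type*} [Field K]
    [AddCommGroup X] [Module K X] [AddCommGroup H] [Module K H]
    (d h δ : X →ₗ[K] X) (i : H →ₗ[K] X) (p : X →ₗ[K] H) (N : ℕ)
    (hd2 : d ∘ₗ d = 0)
    (hdi : d ∘ₗ i = 0) (hpd : p ∘ₗ d = 0)
    (hpi : p ∘ₗ i = LinearMap.id)
    (hhom : LinearMap.id - i ∘ₗ p = d ∘ₗ h + h ∘ₗ d)
    (hh2 : h ∘ₗ h = 0) (hhi : h ∘ₗ i = 0) (hph : p ∘ₗ h = 0)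
    (hD2 : (d + δ) ∘ₗ (d + δ) = 0)
    (hnil : (h ∘ₗ δ) ^ N = 0)
    (S : X →ₗ[K] X)
    (hS : S = ∑ k ∈ Finset.range N, ((-1 : K) ^ k) • (h ∘ₗ δ) ^ k)
    (T : X →ₗ[K] X) (hT : T = δ ∘ₗ S) :
    d ∘ₗ T ∘ₗ i = -(T ∘ₗ (i ∘ₗ p) ∘ₗ T ∘ₗ i) := by
  -- work in the endomorphism ring
  have hmul : ∀ f g : X →ₗ[K] X, f * g = f ∘ₗ g := fun _ _ => rfl
  set e : X →ₗ[K] X := i ∘ₗ p with he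
  -- S is a geometric sum in -(h*δ)
  have hSgeom : S = ∑ k ∈ Finset.range N, (-(h * δ)) ^ k := by
    rw [hS]
    refine Finset.sum_congr rfl fun k _ => ?_
    rw [show -(h * δ) = (-1 : K) • (h * δ) from (neg_one_smul K _).symm, smul_pow]
    rfl
  have hnil' : (-(h * δ)) ^ N = 0 := by
    rw [show -(h * δ) = (-1 : K) • (h * δ) from (neg_one_smul K _).symm, smul_pow,
      show h * δ = h ∘ₗ δ from rfl, hnil, smul_zero]
  -- (1 + h*δ) * S = 1
  have g1 : (1 + h * δ) * S = 1 := by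
    have := mul_neg_geom_sum (-(h * δ)) N
    rw [← hSgeom, hnil', sub_neg_eq_add, sub_zero] at this
    exact this
  -- auxiliary: (δ*h)^(n+1) = δ * ((h*δ)^n * h)
  have haux : ∀ n : ℕ, (δ * h) ^ (n + 1) = δ * ((h * δ) ^ n * h) := by
    intro n
    induction n with
    | zero => simp [pow_succ]
    | succ n ih =>
      rw [pow_succ, ih, pow_succ]
      noncomm_ring
  -- S' : left inverse of (1 + δ*h)
  set S' : X →ₗ[K] X := ∑ k ∈ Finset.range (N + 1), (-(δ * h)) ^ k with hS'
  have hnil'' : (-(δ * h)) ^ (N + 1) = 0 := by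
    rw [show -(δ * h) = (-1 : K) • (δ * h) from (neg_one_smul K _).symm, smul_pow,
      haux N, show h * δ = h ∘ₗ δ from rfl, hnil, zero_mul, mul_zero, smul_zero]
  have g2 : S' * (1 + δ * h) = 1 := by
    have := geom_sum_mul_neg (-(δ * h)) (N + 1)
    rw [← hS', hnil'', sub_neg_eq_add, sub_zero] at this
    exact this
  -- S' * δ = δ * S
  have g3 : S' * δ = δ * S := by
    have hsemi : SemiconjBy δ (-(h * δ)) (-(δ * h)) := by
      unfold SemiconjBy; noncomm_ring
    have hterm : ∀ k : ℕ, (-(δ * h)) ^ k * δ = δ * (-(h * δ)) ^ k := fun k =>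
      (hsemi.pow_right k).symm
    rw [hS', Finset.sum_mul]
    simp_rw [hterm]
    rw [← Finset.mul_sum, Finset.sum_range_succ, hnil', add_zero, ← hSgeom]
  -- from D^2 = 0 : d*δ = -(δ*d) - δ*δ
  have hDδ : d ∘ₗ δ = -(δ ∘ₗ d) - δ ∘ₗ δ := by
    have h0 : d ∘ₗ δ + (δ ∘ₗ d + δ ∘ₗ δ) = 0 := by
      have := hD2
      rw [LinearMap.add_comp, LinearMap.comp_add, LinearMap.comp_add, hd2] at this
      calc d ∘ₗ δ + (δ ∘ₗ d + δ ∘ₗ δ)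
          = 0 + d ∘ₗ δ + (δ ∘ₗ d + δ ∘ₗ δ) := by rw [zero_add]
        _ = 0 := this
    rw [add_eq_zero_iff_eq_neg] at h0
    rw [h0]; abel
  -- S ∘ i = i - h ∘ (T ∘ i)
  have hSone : S = 1 - h ∘ₗ T := by
    have : S + h * δ * S = 1 := by
      calc S + h * δ * S = (1 + h * δ) * S := by noncomm_ring
        _ = 1 := g1
    have h2 : S = 1 - h * δ * S := by rw [← this]; abel
    rw [h2, hT]
    rw [hmul, hmul]
    rw [LinearMap.comp_assoc]
  have hSi : S ∘ₗ i = i - h ∘ₗ (T ∘ₗ i) := by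
    rw [hSone, LinearMap.sub_comp, LinearMap.comp_assoc]
    rfl
  have hTi : δ ∘ₗ (S ∘ₗ i) = T ∘ₗ i := by rw [hT, LinearMap.comp_assoc]
  have hdh : d ∘ₗ h = LinearMap.id - e - h ∘ₗ d := by rw [hhom]; abel
  have hdSi : d ∘ₗ (S ∘ₗ i) =
      -(T ∘ₗ i) + e ∘ₗ (T ∘ₗ i) + h ∘ₗ (d ∘ₗ (T ∘ₗ i)) := by
    rw [hSi, LinearMap.comp_sub, hdi, ← LinearMap.comp_assoc, hdh]
    simp only [LinearMap.sub_comp, LinearMap.id_comp, LinearMap.comp_assoc]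
    abel
  have key0 : d ∘ₗ (T ∘ₗ i) =
      -(δ ∘ₗ (e ∘ₗ (T ∘ₗ i))) - δ ∘ₗ (h ∘ₗ (d ∘ₗ (T ∘ₗ i))) := by
    calc d ∘ₗ (T ∘ₗ i) = (d ∘ₗ δ) ∘ₗ (S ∘ₗ i) := by
          rw [hT, LinearMap.comp_assoc, LinearMap.comp_assoc]
      _ = -(δ ∘ₗ (d ∘ₗ (S ∘ₗ i))) - δ ∘ₗ (δ ∘ₗ (S ∘ₗ i)) := by
          rw [hDδ]
          simp only [LinearMap.sub_comp, LinearMap.neg_comp, LinearMap.comp_assoc]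
      _ = -(δ ∘ₗ (e ∘ₗ (T ∘ₗ i))) - δ ∘ₗ (h ∘ₗ (d ∘ₗ (T ∘ₗ i))) := by
          rw [hdSi, hTi]
          simp only [LinearMap.comp_add, LinearMap.comp_neg]
          abel
  have key : (1 + δ * h) ∘ₗ (d ∘ₗ (T ∘ₗ i)) = -(δ ∘ₗ (e ∘ₗ (T ∘ₗ i))) := by
    have key' : d ∘ₗ (T ∘ₗ i) + δ ∘ₗ (h ∘ₗ (d ∘ₗ (T ∘ₗ i)))
        = -(δ ∘ₗ (e ∘ₗ (T ∘ₗ i))) := by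
      rw [eq_sub_iff_add_eq] at key0
      exact key0
    rw [LinearMap.add_comp, hmul, LinearMap.comp_assoc]
    show d ∘ₗ (T ∘ₗ i) + δ ∘ₗ (h ∘ₗ (d ∘ₗ (T ∘ₗ i))) = _
    exact key'
  calc d ∘ₗ T ∘ₗ i = (S' * (1 + δ * h)) ∘ₗ (d ∘ₗ (T ∘ₗ i)) := by
        rw [g2]
        rfl
    _ = S' ∘ₗ ((1 + δ * h) ∘ₗ (d ∘ₗ (T ∘ₗ i))) := by
        rw [hmul, LinearMap.comp_assoc]
    _ = -((S' * δ) ∘ₗ (e ∘ₗ (T ∘ₗ i))) := by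
        rw [key, LinearMap.comp_neg, hmul, LinearMap.comp_assoc]
        simp only [LinearMap.neg_comp, LinearMap.comp_assoc]
    _ = -(T ∘ₗ (i ∘ₗ p) ∘ₗ T ∘ₗ i) := by
        rw [g3, hmul, ← hT, ← he]
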